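/- Let R be an almost Dedekind domain and I, J fractional ideals of R. For each maximal ideal M let v_M(I) be the integer n with I R_M = (M R_M)^n. Then: ν_I ≤ ν_J pointwise if and only if J ⊆ I; ν_I = ν_J if and only if I = J; ν_{IJ} = ν_I + ν_J; ν_{I+J} = min(ν_I, ν_J) pointwise; and ν_{I∩J} = max(ν_I, ν_J) pointwise. -/

import Mathlib

open nonZeroDivisors

def AlmostDedekind (R : Type*) [CommRing R] [IsDomain R] : Prop :=
  ∀ M : MaximalSpectrum R, IsDiscreteValuationRing (Localization.AtPrime M.asIdeal)

/-- Let `R` be an almost Dedekind domain with fraction field `K`.  For each maximal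
ideal `M` let `v M : K → ℤ` be the valuation of the DVR `R_M` (characterized on
nonzero elements by additivity and, on `R`, by `v M x ≥ n ↔ x ∈ M ^ n`), and for a
nonzero fractional ideal `I` let `ν I M` be the minimum of `v M` on the nonzero
elements of `I` (so that `I R_M = (M R_M) ^ (ν I M)`).  Then:
`ν I ≤ ν J` pointwise iff `J ⊆ I`; `ν I = ν J` iff `I = J`; `ν (IJ) = ν I + ν J`;
`ν (I + J) = min (ν I) (ν J)` pointwise; `ν (I ∩ J) = max (ν I) (ν J)` pointwise. -/
theorem stmt4 {R : Type*} [CommRing R] [IsDomain R] (hR : AlmostDedekind R)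
    (K : Type*) [Field K] [Algebra R K] [IsFractionRing R K]
    (v : MaximalSpectrum R → K → ℤ)
    (hv_mul : ∀ M : MaximalSpectrum R, ∀ x y : K, x ≠ 0 → y ≠ 0 →
      v M (x * y) = v M x + v M y)
    (hv_int : ∀ M : MaximalSpectrum R, ∀ x : R, x ≠ 0 →
      ∀ n : ℕ, ((n : ℤ) ≤ v M (algebraMap R K x) ↔ x ∈ M.asIdeal ^ n))
    (ν : FractionalIdeal R⁰ K → MaximalSpectrum R → ℤ)
    (hν : ∀ I : FractionalIdeal R⁰ K, I ≠ 0 → ∀ M : MaximalSpectrum R,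
      IsLeast (v M '' {x : K | x ∈ I ∧ x ≠ 0}) (ν I M))
    (I J : FractionalIdeal R⁰ K) (hI : I ≠ 0) (hJ : J ≠ 0) :
    ((∀ M, ν I M ≤ ν J M) ↔ J ≤ I) ∧
    ((∀ M, ν I M = ν J M) ↔ I = J) ∧
    (∀ M, ν (I * J) M = ν I M + ν J M) ∧
    (∀ M, ν (I ⊔ J) M = min (ν I M) (ν J M)) ∧
    (∀ M, ν (I ⊓ J) M = max (ν I M) (ν J M)) := by
  classical
  have hKinj : Function.Injective (algebraMap R K) := IsFractionRing.injective R K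
  have hφ : ∀ {r : R}, r ≠ 0 → algebraMap R K r ≠ 0 := by
    intro r hr h
    exact hr (hKinj (by simpa using h))
  have hv_nonneg : ∀ M (r : R), r ≠ 0 → 0 ≤ v M (algebraMap R K r) := by
    intro M r hr
    have := (hv_int M r hr 0).2 (by simp)
    simpa using this
  have hv_unit : ∀ M (s : R), s ∉ M.asIdeal → v M (algebraMap R K s) = 0 := by
    intro M s hs
    have hs0 : s ≠ 0 := by rintro rfl; exact hs M.asIdeal.zero_mem
    have h1 : ¬ (((1 : ℕ) : ℤ) ≤ v M (algebraMap R K s)) := by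
      intro h
      exact hs (by simpa using (hv_int M s hs0 1).1 h)
    have h2 := hv_nonneg M s hs0
    push_cast at h1
    omega
  have hv_zero_not_mem : ∀ M (r : R), r ≠ 0 → v M (algebraMap R K r) ≤ 0 → r ∉ M.asIdeal := by
    intro M r hr h0 hmem
    have := (hv_int M r hr 1).2 (by simpa using hmem)
    push_cast at this
    omega
  -- ultrametric inequality on R
  have hadd_R : ∀ M (a b : R), a ≠ 0 → b ≠ 0 → a + b ≠ 0 →
      min (v M (algebraMap R K a)) (v M (algebraMap R K b)) ≤ v M (algebraMap R K (a + b)) := by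
    intro M a b ha hb hab
    obtain ⟨m, hm⟩ := Int.eq_ofNat_of_zero_le
      (le_min (hv_nonneg M a ha) (hv_nonneg M b hb))
    rw [hm]
    refine (hv_int M _ hab m).2 (Ideal.add_mem _ ?_ ?_)
    · exact (hv_int M a ha m).1 (hm ▸ min_le_left _ _)
    · exact (hv_int M b hb m).1 (hm ▸ min_le_right _ _)
  -- representing nonzero elements of K as fractions
  have hrep : ∀ x : K, x ≠ 0 → ∃ p q : R, p ≠ 0 ∧ q ≠ 0 ∧
      algebraMap R K q * x = algebraMap R K p := by
    intro x hx
    obtain ⟨p, q, hq, hpq⟩ := IsFractionRing.div_surjective (A := R) x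
    have hq0 : q ≠ 0 := nonZeroDivisors.ne_zero hq
    refine ⟨p, q, ?_, hq0, ?_⟩
    · rintro rfl
      rw [map_zero, zero_div] at hpq
      exact hx hpq.symm
    · rw [← hpq, mul_comm, div_mul_cancel₀ _ (hφ hq0)]
  -- ultrametric inequality on K
  have hadd : ∀ M (x y : K), x ≠ 0 → y ≠ 0 → x + y ≠ 0 →
      min (v M x) (v M y) ≤ v M (x + y) := by
    intro M x y hx hy hxy
    obtain ⟨a, b, ha, hb, hab⟩ := hrep x hx
    obtain ⟨c, d, hc, hd, hcd⟩ := hrep y hy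
    have key : algebraMap R K (b * d) * (x + y) = algebraMap R K (a * d + c * b) := by
      rw [map_add, map_mul, map_mul, map_mul, mul_add]
      rw [show algebraMap R K b * algebraMap R K d * x
          = algebraMap R K d * (algebraMap R K b * x) by ring, hab]
      rw [show algebraMap R K b * algebraMap R K d * y
          = algebraMap R K b * (algebraMap R K d * y) by ring, hcd]
      ring
    have h1 : v M (algebraMap R K b) + v M x = v M (algebraMap R K a) := by
      rw [← hv_mul M _ x (hφ hb) hx, hab]
    have h2 : v M (algebraMap R K d) + v M y = v M (algebraMap R K c) := by
      rw [← hv_mul M _ y (hφ hd) hy, hcd]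
    have hs : a * d + c * b ≠ 0 := by
      intro h
      rw [h, map_zero] at key
      exact mul_ne_zero (hφ (mul_ne_zero hb hd)) hxy key
    have h3 : v M (algebraMap R K (b * d)) + v M (x + y)
        = v M (algebraMap R K (a * d + c * b)) := by
      rw [← hv_mul M _ _ (hφ (mul_ne_zero hb hd)) hxy, key]
    have h4 := hadd_R M (a * d) (c * b) (mul_ne_zero ha hd) (mul_ne_zero hc hb) hs
    have h5 : v M (algebraMap R K (a * d)) = v M (algebraMap R K a) + v M (algebraMap R K d) := by
      rw [map_mul]; exact hv_mul M _ _ (hφ ha) (hφ hd)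
    have h6 : v M (algebraMap R K (c * b)) = v M (algebraMap R K c) + v M (algebraMap R K b) := by
      rw [map_mul]; exact hv_mul M _ _ (hφ hc) (hφ hb)
    have h7 : v M (algebraMap R K (b * d)) = v M (algebraMap R K b) + v M (algebraMap R K d) := by
      rw [map_mul]; exact hv_mul M _ _ (hφ hb) (hφ hd)
    rcases min_le_iff.mp h4 with h8 | h8
    · exact min_le_iff.mpr (Or.inl (by linarith))
    · exact min_le_iff.mpr (Or.inr (by linarith))
  -- local divisibility, using that R_M is a valuation ring
  have div_lemma : ∀ (M : MaximalSpectrum R) (p q : R), p ≠ 0 → q ≠ 0 →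
      v M (algebraMap R K q) ≤ v M (algebraMap R K p) →
      ∃ t : R, t ∉ M.asIdeal ∧ ∃ r : R, t * p = q * r := by
    intro M p q hp hq hle
    haveI := hR M
    obtain ⟨c, hc⟩ := ValuationRing.cond
      (algebraMap R (Localization.AtPrime M.asIdeal) p)
      (algebraMap R (Localization.AtPrime M.asIdeal) q)
    obtain ⟨⟨r, s⟩, hrs⟩ := IsLocalization.surj (M := M.asIdeal.primeCompl) c
    have hinj : Function.Injective (algebraMap R (Localization.AtPrime M.asIdeal)) :=
      IsLocalization.injective _ M.asIdeal.primeCompl_le_nonZeroDivisors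
    have hs0 : (s : R) ≠ 0 := by
      intro h2
      exact s.2 (h2 ▸ M.asIdeal.zero_mem)
    rcases hc with hc | hc
    · -- p * c = q, hence q * s = p * r
      have heq : q * (s : R) = p * r := by
        apply hinj
        rw [map_mul, map_mul, ← hc, ← hrs]
        ring
      have hr0 : r ≠ 0 := by
        intro h
        rw [h, mul_zero] at heq
        exact mul_ne_zero hq hs0 heq
      have hvr : v M (algebraMap R K r) ≤ 0 := by
        have e1 : v M (algebraMap R K q) + v M (algebraMap R K (s : R))
            = v M (algebraMap R K p) + v M (algebraMap R K r) := by
          rw [← hv_mul M _ _ (hφ hq) (hφ hs0), ← hv_mul M _ _ (hφ hp) (hφ hr0),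
            ← map_mul, ← map_mul, heq]
        have e2 := hv_unit M s s.2
        linarith
      exact ⟨r, hv_zero_not_mem M r hr0 hvr, s, by linear_combination -heq⟩
    · -- q * c = p, hence p * s = q * r
      have heq : p * (s : R) = q * r := by
        apply hinj
        rw [map_mul, map_mul, ← hc, ← hrs]
        ring
      exact ⟨s, s.2, r, by linear_combination heq⟩
  -- basic facts about ν
  have hlb : ∀ (F : FractionalIdeal R⁰ K), F ≠ 0 → ∀ M, ∀ x : K, x ∈ F → x ≠ 0 →
      ν F M ≤ v M x := fun F hF M x hxF hx => (hν F hF M).2 ⟨x, ⟨hxF, hx⟩, rfl⟩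
  have hattain : ∀ (F : FractionalIdeal R⁰ K), F ≠ 0 → ∀ M,
      ∃ a : K, a ∈ F ∧ a ≠ 0 ∧ v M a = ν F M := by
    intro F hF M
    obtain ⟨a, ⟨haF, ha⟩, hva⟩ := (hν F hF M).1
    exact ⟨a, haF, ha, hva⟩
  -- the key local lemma
  have key : ∀ (F : FractionalIdeal R⁰ K), F ≠ 0 → ∀ M, ∀ x : K, x ≠ 0 → ν F M ≤ v M x →
      ∃ s : R, s ∉ M.asIdeal ∧ algebraMap R K s * x ∈ F := by
    intro F hF M x hx hle
    obtain ⟨a, haF, ha0, hva⟩ := hattain F hF M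
    obtain ⟨p, q, hp, hq, hpq⟩ := hrep (x / a) (div_ne_zero hx ha0)
    have heq : algebraMap R K q * x = algebraMap R K p * a := by
      conv_lhs => rw [← div_mul_cancel₀ x ha0]
      rw [← mul_assoc, hpq]
    have hvv : v M (algebraMap R K q) + v M x = v M (algebraMap R K p) + v M a := by
      rw [← hv_mul M _ _ (hφ hq) hx, ← hv_mul M _ _ (hφ hp) ha0, heq]
    have hqp : v M (algebraMap R K q) ≤ v M (algebraMap R K p) := by
      rw [hva] at hvv
      linarith
    obtain ⟨t, htM, r, htr⟩ := div_lemma M p q hp hq hqp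
    refine ⟨t, htM, ?_⟩
    have h2 : algebraMap R K q * (algebraMap R K t * x)
        = algebraMap R K q * (algebraMap R K r * a) := by
      calc algebraMap R K q * (algebraMap R K t * x)
          = algebraMap R K t * (algebraMap R K q * x) := by ring
        _ = algebraMap R K t * (algebraMap R K p * a) := by rw [heq]
        _ = algebraMap R K (t * p) * a := by rw [map_mul]; ring
        _ = algebraMap R K (q * r) * a := by rw [htr]
        _ = algebraMap R K q * (algebraMap R K r * a) := by rw [map_mul]; ring
    have hfin : algebraMap R K t * x = algebraMap R K r * a := mul_left_cancel₀ (hφ hq) h2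
    rw [hfin]
    have hsm := Submodule.smul_mem (F : Submodule R K) r (FractionalIdeal.mem_coe.mpr haF)
    rw [Algebra.smul_def] at hsm
    exact FractionalIdeal.mem_coe.mp hsm
  -- local-to-global membership
  have glob : ∀ (F : FractionalIdeal R⁰ K) (x : K),
      (∀ M : MaximalSpectrum R, ∃ s : R, s ∉ M.asIdeal ∧ algebraMap R K s * x ∈ F) →
      x ∈ F := by
    intro F x hx
    let C : Ideal R :=
      { carrier := {r : R | algebraMap R K r * x ∈ (F : Submodule R K)}
        add_mem' := by
          intro a b ha hb
          simp only [Set.mem_setOf_eq, map_add, add_mul] at *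
          exact Submodule.add_mem _ ha hb
        zero_mem' := by
          simp only [Set.mem_setOf_eq, map_zero, zero_mul]
          exact Submodule.zero_mem _
        smul_mem' := by
          intro c r hr
          simp only [Set.mem_setOf_eq, smul_eq_mul, map_mul, mul_assoc] at *
          have := Submodule.smul_mem (F : Submodule R K) c hr
          rwa [Algebra.smul_def] at this }
    have hC : C = ⊤ := by
      by_contra h
      obtain ⟨Mx, hMx, hCM⟩ := Ideal.exists_le_maximal C h
      obtain ⟨s, hs, hsx⟩ := hx ⟨Mx, hMx⟩
      exact hs (hCM (show s ∈ C from FractionalIdeal.mem_coe.mpr hsx))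
    have h1 : (1 : R) ∈ C := hC ▸ Submodule.mem_top
    have h2 : algebraMap R K 1 * x ∈ (F : Submodule R K) := h1
    rw [map_one, one_mul] at h2
    exact FractionalIdeal.mem_coe.mp h2
  -- the submodule of elements of valuation ≥ c at M
  have hSmod : ∀ (M : MaximalSpectrum R) (c : ℤ), ∃ S : Submodule R K,
      ∀ z : K, z ∈ S ↔ (z = 0 ∨ c ≤ v M z) := by
    intro M c
    refine ⟨{ carrier := {z : K | z = 0 ∨ c ≤ v M z}
              add_mem' := ?_
              zero_mem' := Or.inl rfl
              smul_mem' := ?_ }, fun z => Iff.rfl⟩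
    · intro a b ha hb
      by_cases ha0 : a = 0
      · subst ha0; simpa using hb
      by_cases hb0 : b = 0
      · subst hb0; simpa using ha
      by_cases hab : a + b = 0
      · exact Or.inl hab
      refine Or.inr ?_
      have ha' := ha.resolve_left ha0
      have hb' := hb.resolve_left hb0
      exact le_trans (le_min ha' hb') (hadd M a b ha0 hb0 hab)
    · intro r z hz
      by_cases hz0 : z = 0
      · subst hz0
        exact Or.inl (smul_zero r)
      by_cases hr : r = 0
      · subst hr
        exact Or.inl (zero_smul R z)
      have hz' := hz.resolve_left hz0
      refine Or.inr ?_
      show c ≤ v M (r • z)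
      rw [Algebra.smul_def, hv_mul M _ _ (hφ hr) hz0]
      have := hv_nonneg M r hr
      linarith
  -- monotonicity and lower bound helpers
  have hanti : ∀ (F G : FractionalIdeal R⁰ K), F ≠ 0 → F ≤ G → ∀ M, ν G M ≤ ν F M := by
    intro F G hF hFG M
    have hG : G ≠ 0 := by
      rintro rfl
      exact hF (le_antisymm hFG (FractionalIdeal.zero_le F))
    obtain ⟨a, haF, ha0, hva⟩ := hattain F hF M
    have := hlb G hG M a (hFG haF) ha0
    linarith
  have hge : ∀ (F : FractionalIdeal R⁰ K), F ≠ 0 → ∀ M (c : ℤ) (S : Submodule R K),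
      (∀ z : K, z ∈ S ↔ (z = 0 ∨ c ≤ v M z)) → (F : Submodule R K) ≤ S → c ≤ ν F M := by
    intro F hF M c S hS hFS
    obtain ⟨a, haF, ha0, hva⟩ := hattain F hF M
    have h := (hS a).mp (hFS (FractionalIdeal.mem_coe.mpr haF))
    rcases h with rfl | h
    · exact absurd rfl ha0
    · linarith
  -- the comparison statement
  have main_le : ∀ (F G : FractionalIdeal R⁰ K), F ≠ 0 → G ≠ 0 →
      ((∀ M, ν F M ≤ ν G M) ↔ G ≤ F) := by
    intro F G hF hG
    constructor
    · intro h x hxG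
      by_cases hx0 : x = 0
      · subst hx0
        exact FractionalIdeal.mem_coe.mp (Submodule.zero_mem _)
      refine glob F x ?_
      intro M
      exact key F hF M x hx0 (le_trans (h M) (hlb G hG M x hxG hx0))
    · intro hGF M
      obtain ⟨a, haG, ha0, hva⟩ := hattain G hG M
      have := hlb F hF M a (hGF haG) ha0
      linarith
  refine ⟨main_le I J hI hJ, ?_, ?_, ?_, ?_⟩
  · constructor
    · intro h
      exact le_antisymm ((main_le J I hJ hI).mp fun M => (h M).ge)
        ((main_le I J hI hJ).mp fun M => (h M).le)
    · rintro rfl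
      intro M
      rfl
  · -- multiplicativity
    intro M
    obtain ⟨a, haI, ha0, hva⟩ := hattain I hI M
    obtain ⟨b, hbJ, hb0, hvb⟩ := hattain J hJ M
    have hIJ : I * J ≠ 0 := by
      intro h0
      have hmem : a * b ∈ I * J := FractionalIdeal.mul_mem_mul haI hbJ
      rw [h0, FractionalIdeal.mem_zero_iff] at hmem
      exact mul_ne_zero ha0 hb0 hmem
    have hub : ν (I * J) M ≤ ν I M + ν J M := by
      have hmem : a * b ∈ I * J := FractionalIdeal.mul_mem_mul haI hbJ
      have h := hlb (I * J) hIJ M (a * b) hmem (mul_ne_zero ha0 hb0)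
      rw [hv_mul M a b ha0 hb0] at h
      linarith
    have hlbv : ν I M + ν J M ≤ ν (I * J) M := by
      obtain ⟨S, hS⟩ := hSmod M (ν I M + ν J M)
      refine hge (I * J) hIJ M _ S hS ?_
      rw [FractionalIdeal.coe_mul]
      refine Submodule.mul_le.mpr ?_
      intro x hx y hy
      by_cases hx0 : x = 0
      · subst hx0
        rw [zero_mul]
        exact (hS 0).mpr (Or.inl rfl)
      by_cases hy0 : y = 0
      · subst hy0
        rw [mul_zero]
        exact (hS 0).mpr (Or.inl rfl)
      refine (hS _).mpr (Or.inr ?_)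
      rw [hv_mul M x y hx0 hy0]
      have h1 := hlb I hI M x (FractionalIdeal.mem_coe.mp hx) hx0
      have h2 := hlb J hJ M y (FractionalIdeal.mem_coe.mp hy) hy0
      linarith
    omega
  · -- sup
    intro M
    have hsupne : I ⊔ J ≠ 0 := by
      intro h
      exact hI (le_antisymm (h ▸ le_sup_left) (FractionalIdeal.zero_le I))
    have hle1 : ν (I ⊔ J) M ≤ ν I M := hanti I (I ⊔ J) hI le_sup_left M
    have hle2 : ν (I ⊔ J) M ≤ ν J M := hanti J (I ⊔ J) hJ le_sup_right M
    have hgeq : min (ν I M) (ν J M) ≤ ν (I ⊔ J) M := by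
      obtain ⟨S, hS⟩ := hSmod M (min (ν I M) (ν J M))
      refine hge _ hsupne M _ S hS ?_
      rw [FractionalIdeal.coe_sup]
      refine sup_le ?_ ?_
      · intro x hx
        by_cases hx0 : x = 0
        · exact (hS x).mpr (Or.inl hx0)
        exact (hS x).mpr (Or.inr (le_trans (min_le_left _ _)
          (hlb I hI M x (FractionalIdeal.mem_coe.mp hx) hx0)))
      · intro x hx
        by_cases hx0 : x = 0
        · exact (hS x).mpr (Or.inl hx0)
        exact (hS x).mpr (Or.inr (le_trans (min_le_right _ _)
          (hlb J hJ M x (FractionalIdeal.mem_coe.mp hx) hx0)))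
    exact le_antisymm (le_min hle1 hle2) hgeq
  · -- inf
    intro M
    have hinfne : I ⊓ J ≠ 0 := by
      obtain ⟨a, haI, ha0, _⟩ := hattain I hI M
      obtain ⟨b, hbJ, hb0, _⟩ := hattain J hJ M
      obtain ⟨p, q, hp, hq, hpq⟩ := hrep (a / b) (div_ne_zero ha0 hb0)
      have heq : algebraMap R K q * a = algebraMap R K p * b := by
        conv_lhs => rw [← div_mul_cancel₀ a hb0]
        rw [← mul_assoc, hpq]
      intro h0
      have hmemI : algebraMap R K q * a ∈ (I : Submodule R K) := by
        have := Submodule.smul_mem (I : Submodule R K) q (FractionalIdeal.mem_coe.mpr haI)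
        rwa [Algebra.smul_def] at this
      have hmemJ : algebraMap R K q * a ∈ (J : Submodule R K) := by
        rw [heq]
        have := Submodule.smul_mem (J : Submodule R K) p (FractionalIdeal.mem_coe.mpr hbJ)
        rwa [Algebra.smul_def] at this
      have hmem : algebraMap R K q * a ∈ I ⊓ J := by
        rw [← FractionalIdeal.mem_coe, FractionalIdeal.coe_inf]
        exact ⟨hmemI, hmemJ⟩
      rw [h0, FractionalIdeal.mem_zero_iff] at hmem
      exact mul_ne_zero (hφ hq) ha0 hmem
    have hge1 : ν I M ≤ ν (I ⊓ J) M := hanti (I ⊓ J) I hinfne inf_le_left M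
    have hge2 : ν J M ≤ ν (I ⊓ J) M := hanti (I ⊓ J) J hinfne inf_le_right M
    have hlemax : ν (I ⊓ J) M ≤ max (ν I M) (ν J M) := by
      rcases le_total (ν I M) (ν J M) with hc | hc
      · obtain ⟨b, hbJ, hb0, hvb⟩ := hattain J hJ M
        obtain ⟨s, hsM, hsb⟩ := key I hI M b hb0 (hvb.symm ▸ hc)
        have hs0 : s ≠ 0 := by rintro rfl; exact hsM M.asIdeal.zero_mem
        have hzJ : algebraMap R K s * b ∈ (J : Submodule R K) := by
          have := Submodule.smul_mem (J : Submodule R K) s (FractionalIdeal.mem_coe.mpr hbJ)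
          rwa [Algebra.smul_def] at this
        have hzmem : algebraMap R K s * b ∈ I ⊓ J := by
          rw [← FractionalIdeal.mem_coe, FractionalIdeal.coe_inf]
          exact ⟨FractionalIdeal.mem_coe.mpr hsb, hzJ⟩
        have hlb2 := hlb (I ⊓ J) hinfne M _ hzmem (mul_ne_zero (hφ hs0) hb0)
        rw [hv_mul M _ b (hφ hs0) hb0, hv_unit M s hsM, hvb] at hlb2
        rw [max_eq_right hc]
        linarith
      · obtain ⟨b, hbI, hb0, hvb⟩ := hattain I hI M
        obtain ⟨s, hsM, hsb⟩ := key J hJ M b hb0 (hvb.symm ▸ hc)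
        have hs0 : s ≠ 0 := by rintro rfl; exact hsM M.asIdeal.zero_mem
        have hzI : algebraMap R K s * b ∈ (I : Submodule R K) := by
          have := Submodule.smul_mem (I : Submodule R K) s (FractionalIdeal.mem_coe.mpr hbI)
          rwa [Algebra.smul_def] at this
        have hzmem : algebraMap R K s * b ∈ I ⊓ J := by
          rw [← FractionalIdeal.mem_coe, FractionalIdeal.coe_inf]
          exact ⟨hzI, FractionalIdeal.mem_coe.mpr hsb⟩
        have hlb2 := hlb (I ⊓ J) hinfne M _ hzmem (mul_ne_zero (hφ hs0) hb0)
        rw [hv_mul M _ b (hφ hs0) hb0, hv_unit M s hsM, hvb] at hlb2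
        rw [max_eq_left hc]
        linarith
    exact le_antisymm hlemax (max_le hge1 hge2)
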